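/- The category of pastures has fibered coproducts (pushouts): for any pastures P, P₁, P₂ and any morphisms of pastures f₁ : P → P₁ and f₂ : P → P₂, there exists a pasture Q together with morphisms of pastures i₁ : P₁ → Q and i₂ : P₂ → Q with i₁ ∘ f₁ = i₂ ∘ f₂, such that for every pasture P' with morphisms g₁ : P₁ → P' and g₂ : P₂ → P' satisfying g₁ ∘ f₁ = g₂ ∘ f₂ there is a unique morphism of pastures g : Q → P' with g ∘ i₁ = g₁ and g ∘ i₂ = g₂. -/

import Mathlib

universe u v w

/-- A pasture structure on a type `P`: a multiplication, a zero, a one,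
an involution `neg`, and a ternary nullset relation `null a b c`
(meaning "`a + b + c = 0`"). -/
structure PastureStr (P : Type u) where
  mul : P → P → P
  zero : P
  one : P
  neg : P → P
  null : P → P → P → Prop

/-- `P` together with a `PastureStr` is a pasture: `P` is a commutative
monoid with zero whose nonzero elements form an abelian group, `neg` is an
involution fixing `0`, and the nullset is invariant under permutations,
invariant under multiplication, and satisfies `a + b + 0 = 0 ↔ a = -b`. -/
structure PastureStr.IsPasture {P : Type u} (S : PastureStr P) : Prop where
  mul_comm : ∀ a b : P, S.mul a b = S.mul b a
  mul_assoc : ∀ a b c : P, S.mul (S.mul a b) c = S.mul a (S.mul b c)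
  one_mul : ∀ a : P, S.mul S.one a = a
  zero_mul : ∀ a : P, S.mul S.zero a = S.zero
  one_ne_zero : S.one ≠ S.zero
  mul_ne_zero : ∀ a b : P, a ≠ S.zero → b ≠ S.zero → S.mul a b ≠ S.zero
  exists_inv : ∀ a : P, a ≠ S.zero → ∃ b : P, S.mul a b = S.one
  neg_neg : ∀ a : P, S.neg (S.neg a) = a
  neg_zero : S.neg S.zero = S.zero
  null_swap_left : ∀ a b c : P, S.null a b c → S.null b a c
  null_swap_right : ∀ a b c : P, S.null a b c → S.null a c b
  null_mul : ∀ d a b c : P, S.null a b c → S.null (S.mul d a) (S.mul d b) (S.mul d c)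
  null_zero : ∀ a b : P, S.null a b S.zero ↔ a = S.neg b

/-- A morphism of pastures: a multiplicative map preserving `0`, `1`,
the involution and the nullset. -/
structure PastureStr.IsHom {P : Type u} {P' : Type v} (S : PastureStr P) (T : PastureStr P')
    (f : P → P') : Prop where
  map_mul : ∀ a b : P, f (S.mul a b) = T.mul (f a) (f b)
  map_zero : f S.zero = T.zero
  map_one : f S.one = T.one
  map_neg : ∀ a : P, f (S.neg a) = T.neg (f a)
  map_null : ∀ a b c : P, S.null a b c → T.null (f a) (f b) (f c)

set_option linter.unusedSectionVars false
namespace PastureAux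

variable {A : Type*} {B : Type*} {S : PastureStr A} {T : PastureStr B}

theorem mul_one (h : S.IsPasture) (a : A) : S.mul a S.one = a := by
  rw [h.mul_comm, h.one_mul]

theorem mul_zero (h : S.IsPasture) (a : A) : S.mul a S.zero = S.zero := by
  rw [h.mul_comm, h.zero_mul]

theorem mul_eq_zero (h : S.IsPasture) {a b : A} :
    S.mul a b = S.zero ↔ a = S.zero ∨ b = S.zero := by
  constructor
  · intro hab
    by_contra hc
    push_neg at hc
    exact h.mul_ne_zero a b hc.1 hc.2 hab
  · rintro (rfl | rfl)
    · exact h.zero_mul b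
    · exact mul_zero h a

theorem mul_neg (h : S.IsPasture) (a b : A) : S.mul a (S.neg b) = S.neg (S.mul a b) := by
  have h1 : S.null (S.neg b) b S.zero := (h.null_zero _ _).2 rfl
  have h2 := h.null_mul a _ _ _ h1
  rw [mul_zero h] at h2
  exact (h.null_zero _ _).1 h2

theorem neg_mul (h : S.IsPasture) (a b : A) : S.mul (S.neg a) b = S.neg (S.mul a b) := by
  rw [h.mul_comm, mul_neg h, h.mul_comm]

theorem neg_eq_zero (h : S.IsPasture) {a : A} : S.neg a = S.zero ↔ a = S.zero := by
  constructor
  · intro ha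
    have := congrArg S.neg ha
    rwa [h.neg_neg, h.neg_zero] at this
  · rintro rfl; exact h.neg_zero

theorem mul_mul_mul_comm (h : S.IsPasture) (a b c d : A) :
    S.mul (S.mul a b) (S.mul c d) = S.mul (S.mul a c) (S.mul b d) := by
  rw [h.mul_assoc a b, ← h.mul_assoc b c d, h.mul_comm b c, h.mul_assoc c b d,
    ← h.mul_assoc a c]

theorem neg_one_sq (h : S.IsPasture) : S.mul (S.neg S.one) (S.neg S.one) = S.one := by
  rw [mul_neg h, mul_one h, h.neg_neg]

theorem hom_ne_zero (hA : S.IsPasture) (hB : T.IsPasture) {f : A → B}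
    (hf : S.IsHom T f) {a : A} (ha : a ≠ S.zero) : f a ≠ T.zero := by
  obtain ⟨b, hb⟩ := hA.exists_inv a ha
  intro h0
  have := congrArg f hb
  rw [hf.map_mul, hf.map_one, h0, hB.zero_mul] at this
  exact hB.one_ne_zero this.symm

theorem mul_cancel (h : S.IsPasture) {a b c : A} (ha : a ≠ S.zero)
    (hab : S.mul a b = S.mul a c) : b = c := by
  obtain ⟨a', ha'⟩ := h.exists_inv a ha
  have := congrArg (S.mul a') hab
  rw [← h.mul_assoc, ← h.mul_assoc, h.mul_comm a' a, ha', h.one_mul, h.one_mul] at this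
  exact this

theorem unit_ne_zero (h : S.IsPasture) {a b : A} (hab : S.mul a b = S.one) :
    a ≠ S.zero := by
  rintro rfl
  rw [h.zero_mul] at hab
  exact h.one_ne_zero hab.symm

section Push

variable {P P₁ P₂ : Type u}

abbrev Zt (S₁ : PastureStr P₁) (S₂ : PastureStr P₂) : Type u :=
  {p : P₁ × P₂ // p.1 = S₁.zero ↔ p.2 = S₂.zero}

theorem Zt.ext {S₁ : PastureStr P₁} {S₂ : PastureStr P₂} {z w : Zt S₁ S₂}
    (h1 : z.1.1 = w.1.1) (h2 : z.1.2 = w.1.2) : z = w :=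
  Subtype.ext (Prod.ext h1 h2)

variable (S : PastureStr P) (S₁ : PastureStr P₁) (S₂ : PastureStr P₂)
    (f₁ : P → P₁) (f₂ : P → P₂)

def Rel (z w : Zt S₁ S₂) : Prop :=
  ∃ a a' : P, S.mul a a' = S.one ∧
    w.1.1 = S₁.mul z.1.1 (f₁ a) ∧ w.1.2 = S₂.mul z.1.2 (f₂ a')

variable (hS : S.IsPasture) (hS₁ : S₁.IsPasture) (hS₂ : S₂.IsPasture)
    (hf₁ : S.IsHom S₁ f₁) (hf₂ : S.IsHom S₂ f₂)

include hS hS₁ hS₂ hf₁ hf₂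

theorem rel_refl (z : Zt S₁ S₂) : Rel S S₁ S₂ f₁ f₂ z z := by
  refine ⟨S.one, S.one, mul_one hS _, ?_, ?_⟩
  · rw [hf₁.map_one, mul_one hS₁]
  · rw [hf₂.map_one, mul_one hS₂]

theorem rel_symm {z w : Zt S₁ S₂} (h : Rel S S₁ S₂ f₁ f₂ z w) :
    Rel S S₁ S₂ f₁ f₂ w z := by
  obtain ⟨a, a', h1, h2, h3⟩ := h
  refine ⟨a', a, by rwa [hS.mul_comm], ?_, ?_⟩
  · rw [h2, hS₁.mul_assoc, ← hf₁.map_mul, h1, hf₁.map_one, mul_one hS₁]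
  · rw [h3, hS₂.mul_assoc, ← hf₂.map_mul, hS.mul_comm a' a, h1, hf₂.map_one, mul_one hS₂]

theorem rel_trans {z w u : Zt S₁ S₂} (h : Rel S S₁ S₂ f₁ f₂ z w)
    (h' : Rel S S₁ S₂ f₁ f₂ w u) : Rel S S₁ S₂ f₁ f₂ z u := by
  obtain ⟨a, a', h1, h2, h3⟩ := h
  obtain ⟨b, b', h1', h2', h3'⟩ := h'
  refine ⟨S.mul a b, S.mul a' b', ?_, ?_, ?_⟩
  · rw [mul_mul_mul_comm hS, h1, h1', mul_one hS]
  · rw [h2', h2, hS₁.mul_assoc, ← hf₁.map_mul]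
  · rw [h3', h3, hS₂.mul_assoc, ← hf₂.map_mul]

def pSetoid : Setoid (Zt S₁ S₂) :=
  ⟨Rel S S₁ S₂ f₁ f₂,
    rel_refl S S₁ S₂ f₁ f₂ hS hS₁ hS₂ hf₁ hf₂,
    fun h => rel_symm S S₁ S₂ f₁ f₂ hS hS₁ hS₂ hf₁ hf₂ h,
    fun h h' => rel_trans S S₁ S₂ f₁ f₂ hS hS₁ hS₂ hf₁ hf₂ h h'⟩

def Q : Type u := Quotient (pSetoid S S₁ S₂ f₁ f₂ hS hS₁ hS₂ hf₁ hf₂)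

def mkQ (z : Zt S₁ S₂) : Q S S₁ S₂ f₁ f₂ hS hS₁ hS₂ hf₁ hf₂ :=
  Quotient.mk (pSetoid S S₁ S₂ f₁ f₂ hS hS₁ hS₂ hf₁ hf₂) z

local notation "QQ" => Q S S₁ S₂ f₁ f₂ hS hS₁ hS₂ hf₁ hf₂
local notation "mk" => mkQ S S₁ S₂ f₁ f₂ hS hS₁ hS₂ hf₁ hf₂

def qzero : QQ := mk ⟨(S₁.zero, S₂.zero), by simp⟩

def qone : QQ := mk ⟨(S₁.one, S₂.one), iff_of_false hS₁.one_ne_zero hS₂.one_ne_zero⟩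

def zmul (z w : Zt S₁ S₂) : Zt S₁ S₂ :=
  ⟨(S₁.mul z.1.1 w.1.1, S₂.mul z.1.2 w.1.2), by
    rw [mul_eq_zero hS₁, mul_eq_zero hS₂, z.2, w.2]⟩

local notation "zmulA" => zmul S₁ S₂ hS₁ hS₂

theorem zmul_rel {z z' w w' : Zt S₁ S₂} (h : Rel S S₁ S₂ f₁ f₂ z z')
    (h' : Rel S S₁ S₂ f₁ f₂ w w') :
    Rel S S₁ S₂ f₁ f₂ (zmulA z w) (zmulA z' w') := by
  obtain ⟨a, a', h1, h2, h3⟩ := h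
  obtain ⟨b, b', h1', h2', h3'⟩ := h'
  refine ⟨S.mul a b, S.mul a' b', ?_, ?_, ?_⟩
  · rw [mul_mul_mul_comm hS, h1, h1', mul_one hS]
  · show S₁.mul z'.1.1 w'.1.1 = S₁.mul (S₁.mul z.1.1 w.1.1) _
    rw [h2, h2', hf₁.map_mul, mul_mul_mul_comm hS₁]
  · show S₂.mul z'.1.2 w'.1.2 = S₂.mul (S₂.mul z.1.2 w.1.2) _
    rw [h3, h3', hf₂.map_mul, mul_mul_mul_comm hS₂]

def qmul : QQ → QQ → QQ :=
  Quotient.map₂ zmulA (fun _ _ h _ _ h' => zmul_rel S S₁ S₂ f₁ f₂ hS hS₁ hS₂ hf₁ hf₂ h h')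

def zneg (z : Zt S₁ S₂) : Zt S₁ S₂ :=
  ⟨(S₁.neg z.1.1, z.1.2), by rw [neg_eq_zero hS₁]; exact z.2⟩

local notation "znegA" => zneg S₁ hS₁ (S₂ := S₂)

theorem zneg_rel {z w : Zt S₁ S₂} (h : Rel S S₁ S₂ f₁ f₂ z w) :
    Rel S S₁ S₂ f₁ f₂ (znegA z) (znegA w) := by
  obtain ⟨a, a', h1, h2, h3⟩ := h
  refine ⟨a, a', h1, ?_, h3⟩
  show S₁.neg w.1.1 = S₁.mul (S₁.neg z.1.1) (f₁ a)
  rw [h2, neg_mul hS₁]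

def qneg : QQ → QQ :=
  Quotient.map znegA (fun _ _ h => zneg_rel S S₁ S₂ f₁ f₂ hS hS₁ hS₂ hf₁ hf₂ h)

local notation "qmulA" => qmul S S₁ S₂ f₁ f₂ hS hS₁ hS₂ hf₁ hf₂
local notation "qnegA" => qneg S S₁ S₂ f₁ f₂ hS hS₁ hS₂ hf₁ hf₂
local notation "qzeroA" => qzero S S₁ S₂ f₁ f₂ hS hS₁ hS₂ hf₁ hf₂
local notation "qoneA" => qone S S₁ S₂ f₁ f₂ hS hS₁ hS₂ hf₁ hf₂

noncomputable def io₁ (x : P₁) : QQ :=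
  letI := Classical.propDecidable (x = S₁.zero)
  if hx : x = S₁.zero then qzeroA
  else mk ⟨(x, S₂.one), iff_of_false hx hS₂.one_ne_zero⟩

noncomputable def io₂ (y : P₂) : QQ :=
  letI := Classical.propDecidable (y = S₂.zero)
  if hy : y = S₂.zero then qzeroA
  else mk ⟨(S₁.one, y), iff_of_false hS₁.one_ne_zero hy⟩

local notation "io₁A" => io₁ S S₁ S₂ f₁ f₂ hS hS₁ hS₂ hf₁ hf₂
local notation "io₂A" => io₂ S S₁ S₂ f₁ f₂ hS hS₁ hS₂ hf₁ hf₂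

def qnull (q₁ q₂ q₃ : QQ) : Prop :=
  (∃ d a b c, S₁.null a b c ∧ q₁ = qmulA d (io₁A a) ∧ q₂ = qmulA d (io₁A b) ∧
    q₃ = qmulA d (io₁A c)) ∨
  (∃ d a b c, S₂.null a b c ∧ q₁ = qmulA d (io₂A a) ∧ q₂ = qmulA d (io₂A b) ∧
    q₃ = qmulA d (io₂A c))

noncomputable def SQ : PastureStr QQ :=
  ⟨qmulA, qzeroA, qoneA, qnegA, qnull S S₁ S₂ f₁ f₂ hS hS₁ hS₂ hf₁ hf₂⟩

local notation "mkq" => Quotient.mk (pSetoid S S₁ S₂ f₁ f₂ hS hS₁ hS₂ hf₁ hf₂)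

theorem mk_eq_mk {z w : Zt S₁ S₂} (h1 : z.1.1 = w.1.1) (h2 : z.1.2 = w.1.2) :
    mk z = mk w := congrArg _ (Zt.ext h1 h2)

theorem q_ind {motive : QQ → Prop} (h : ∀ z, motive (mk z)) : ∀ q, motive q :=
  fun q => Quotient.ind h q

theorem qmul_mk (z w : Zt S₁ S₂) : qmulA (mk z) (mk w) = mk (zmulA z w) := rfl

theorem qneg_mk (z : Zt S₁ S₂) : qnegA (mk z) = mk (znegA z) := rfl

theorem eq_zero_iff (z : Zt S₁ S₂) : mk z = qzeroA ↔ z.1.1 = S₁.zero := by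
  constructor
  · intro h
    obtain ⟨a, a', h1, h2, h3⟩ := Quotient.exact h
    have ha : f₁ a ≠ S₁.zero :=
      hom_ne_zero hS hS₁ hf₁ (unit_ne_zero hS h1)
    rcases (mul_eq_zero hS₁).1 h2.symm with h | h
    · exact h
    · exact absurd h ha
  · intro h
    exact mk_eq_mk S S₁ S₂ f₁ f₂ hS hS₁ hS₂ hf₁ hf₂ h (z.2.1 h)

theorem qmul_comm (p q : QQ) : qmulA p q = qmulA q p := by
  induction p using q_ind S S₁ S₂ f₁ f₂ hS hS₁ hS₂ hf₁ hf₂ with | h z =>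
  induction q using q_ind S S₁ S₂ f₁ f₂ hS hS₁ hS₂ hf₁ hf₂ with | h w =>
  exact mk_eq_mk S S₁ S₂ f₁ f₂ hS hS₁ hS₂ hf₁ hf₂ (hS₁.mul_comm _ _) (hS₂.mul_comm _ _)

theorem qmul_assoc (p q r : QQ) : qmulA (qmulA p q) r = qmulA p (qmulA q r) := by
  induction p using q_ind S S₁ S₂ f₁ f₂ hS hS₁ hS₂ hf₁ hf₂ with | h z =>
  induction q using q_ind S S₁ S₂ f₁ f₂ hS hS₁ hS₂ hf₁ hf₂ with | h w =>
  induction r using q_ind S S₁ S₂ f₁ f₂ hS hS₁ hS₂ hf₁ hf₂ with | h u =>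
  exact mk_eq_mk S S₁ S₂ f₁ f₂ hS hS₁ hS₂ hf₁ hf₂ (hS₁.mul_assoc _ _ _) (hS₂.mul_assoc _ _ _)

theorem qone_mul (p : QQ) : qmulA qoneA p = p := by
  induction p using q_ind S S₁ S₂ f₁ f₂ hS hS₁ hS₂ hf₁ hf₂ with | h z =>
  exact mk_eq_mk S S₁ S₂ f₁ f₂ hS hS₁ hS₂ hf₁ hf₂ (hS₁.one_mul _) (hS₂.one_mul _)

theorem qmul_one (p : QQ) : qmulA p qoneA = p := by
  induction p using q_ind S S₁ S₂ f₁ f₂ hS hS₁ hS₂ hf₁ hf₂ with | h z =>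
  exact mk_eq_mk S S₁ S₂ f₁ f₂ hS hS₁ hS₂ hf₁ hf₂ (mul_one hS₁ _) (mul_one hS₂ _)

theorem qzero_mul (p : QQ) : qmulA qzeroA p = qzeroA := by
  induction p using q_ind S S₁ S₂ f₁ f₂ hS hS₁ hS₂ hf₁ hf₂ with | h z =>
  exact mk_eq_mk S S₁ S₂ f₁ f₂ hS hS₁ hS₂ hf₁ hf₂ (hS₁.zero_mul _) (hS₂.zero_mul _)

theorem qmul_zero (p : QQ) : qmulA p qzeroA = qzeroA := by
  rw [qmul_comm S S₁ S₂ f₁ f₂ hS hS₁ hS₂ hf₁ hf₂, qzero_mul S S₁ S₂ f₁ f₂ hS hS₁ hS₂ hf₁ hf₂]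

theorem qmul_eq_zero {p q : QQ} :
    qmulA p q = qzeroA ↔ p = qzeroA ∨ q = qzeroA := by
  induction p using q_ind S S₁ S₂ f₁ f₂ hS hS₁ hS₂ hf₁ hf₂ with | h z =>
  induction q using q_ind S S₁ S₂ f₁ f₂ hS hS₁ hS₂ hf₁ hf₂ with | h w =>
  rw [qmul_mk, eq_zero_iff S S₁ S₂ f₁ f₂ hS hS₁ hS₂ hf₁ hf₂,
    eq_zero_iff S S₁ S₂ f₁ f₂ hS hS₁ hS₂ hf₁ hf₂,
    eq_zero_iff S S₁ S₂ f₁ f₂ hS hS₁ hS₂ hf₁ hf₂]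
  exact mul_eq_zero hS₁

theorem qneg_neg (p : QQ) : qnegA (qnegA p) = p := by
  induction p using q_ind S S₁ S₂ f₁ f₂ hS hS₁ hS₂ hf₁ hf₂ with | h z =>
  exact mk_eq_mk S S₁ S₂ f₁ f₂ hS hS₁ hS₂ hf₁ hf₂ (hS₁.neg_neg _) rfl

theorem qneg_zero : qnegA qzeroA = qzeroA :=
  mk_eq_mk S S₁ S₂ f₁ f₂ hS hS₁ hS₂ hf₁ hf₂ hS₁.neg_zero rfl

theorem qmul_neg (p q : QQ) : qmulA p (qnegA q) = qnegA (qmulA p q) := by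
  induction p using q_ind S S₁ S₂ f₁ f₂ hS hS₁ hS₂ hf₁ hf₂ with | h z =>
  induction q using q_ind S S₁ S₂ f₁ f₂ hS hS₁ hS₂ hf₁ hf₂ with | h w =>
  exact mk_eq_mk S S₁ S₂ f₁ f₂ hS hS₁ hS₂ hf₁ hf₂ (mul_neg hS₁ _ _) rfl

theorem io₁_zero : io₁A S₁.zero = qzeroA := dif_pos rfl

theorem io₂_zero : io₂A S₂.zero = qzeroA := dif_pos rfl

theorem io₁_eq {x : P₁} (hx : x ≠ S₁.zero) (z : Zt S₁ S₂)
    (h1 : z.1.1 = x) (h2 : z.1.2 = S₂.one) : io₁A x = mk z := by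
  rw [io₁]
  simp only [dif_neg hx]
  exact mk_eq_mk S S₁ S₂ f₁ f₂ hS hS₁ hS₂ hf₁ hf₂ h1.symm h2.symm

theorem io₂_eq {y : P₂} (hy : y ≠ S₂.zero) (z : Zt S₁ S₂)
    (h1 : z.1.1 = S₁.one) (h2 : z.1.2 = y) : io₂A y = mk z := by
  rw [io₂]
  simp only [dif_neg hy]
  exact mk_eq_mk S S₁ S₂ f₁ f₂ hS hS₁ hS₂ hf₁ hf₂ h1.symm h2.symm

theorem io₁_one : io₁A S₁.one = qoneA := by
  rw [io₁_eq S S₁ S₂ f₁ f₂ hS hS₁ hS₂ hf₁ hf₂ hS₁.one_ne_zero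
    ⟨(S₁.one, S₂.one), iff_of_false hS₁.one_ne_zero hS₂.one_ne_zero⟩ rfl rfl]
  exact mk_eq_mk S S₁ S₂ f₁ f₂ hS hS₁ hS₂ hf₁ hf₂ rfl rfl

theorem io₂_one : io₂A S₂.one = qoneA := by
  rw [io₂_eq S S₁ S₂ f₁ f₂ hS hS₁ hS₂ hf₁ hf₂ hS₂.one_ne_zero
    ⟨(S₁.one, S₂.one), iff_of_false hS₁.one_ne_zero hS₂.one_ne_zero⟩ rfl rfl]
  exact mk_eq_mk S S₁ S₂ f₁ f₂ hS hS₁ hS₂ hf₁ hf₂ rfl rfl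

theorem io₁_ne_zero {x : P₁} (hx : x ≠ S₁.zero) : io₁A x ≠ qzeroA := by
  intro h0
  rw [io₁_eq S S₁ S₂ f₁ f₂ hS hS₁ hS₂ hf₁ hf₂ hx
    ⟨(x, S₂.one), iff_of_false hx hS₂.one_ne_zero⟩ rfl rfl] at h0
  exact hx ((eq_zero_iff S S₁ S₂ f₁ f₂ hS hS₁ hS₂ hf₁ hf₂ _).1 h0)

theorem io₂_ne_zero {y : P₂} (hy : y ≠ S₂.zero) : io₂A y ≠ qzeroA := by
  intro h0
  rw [io₂_eq S S₁ S₂ f₁ f₂ hS hS₁ hS₂ hf₁ hf₂ hy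
    ⟨(S₁.one, y), iff_of_false hS₁.one_ne_zero hy⟩ rfl rfl] at h0
  exact hS₁.one_ne_zero ((eq_zero_iff S S₁ S₂ f₁ f₂ hS hS₁ hS₂ hf₁ hf₂ _).1 h0)

theorem io₁_map_mul (x x' : P₁) :
    io₁A (S₁.mul x x') = qmulA (io₁A x) (io₁A x') := by
  by_cases hx : x = S₁.zero
  · subst hx
    rw [hS₁.zero_mul, io₁_zero S S₁ S₂ f₁ f₂ hS hS₁ hS₂ hf₁ hf₂, qzero_mul S S₁ S₂ f₁ f₂ hS hS₁ hS₂ hf₁ hf₂]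
  by_cases hx' : x' = S₁.zero
  · subst hx'
    rw [mul_zero hS₁, io₁_zero S S₁ S₂ f₁ f₂ hS hS₁ hS₂ hf₁ hf₂, qmul_zero S S₁ S₂ f₁ f₂ hS hS₁ hS₂ hf₁ hf₂]
  rw [io₁_eq S S₁ S₂ f₁ f₂ hS hS₁ hS₂ hf₁ hf₂ hx
      ⟨(x, S₂.one), iff_of_false hx hS₂.one_ne_zero⟩ rfl rfl,
    io₁_eq S S₁ S₂ f₁ f₂ hS hS₁ hS₂ hf₁ hf₂ hx'
      ⟨(x', S₂.one), iff_of_false hx' hS₂.one_ne_zero⟩ rfl rfl,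
    io₁_eq S S₁ S₂ f₁ f₂ hS hS₁ hS₂ hf₁ hf₂ (hS₁.mul_ne_zero x x' hx hx')
      ⟨(S₁.mul x x', S₂.one), iff_of_false (hS₁.mul_ne_zero x x' hx hx') hS₂.one_ne_zero⟩ rfl rfl,
    qmul_mk]
  exact mk_eq_mk S S₁ S₂ f₁ f₂ hS hS₁ hS₂ hf₁ hf₂ rfl (hS₂.one_mul _).symm

theorem io₂_map_mul (y y' : P₂) :
    io₂A (S₂.mul y y') = qmulA (io₂A y) (io₂A y') := by
  by_cases hy : y = S₂.zero
  · subst hy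
    rw [hS₂.zero_mul, io₂_zero S S₁ S₂ f₁ f₂ hS hS₁ hS₂ hf₁ hf₂, qzero_mul S S₁ S₂ f₁ f₂ hS hS₁ hS₂ hf₁ hf₂]
  by_cases hy' : y' = S₂.zero
  · subst hy'
    rw [mul_zero hS₂, io₂_zero S S₁ S₂ f₁ f₂ hS hS₁ hS₂ hf₁ hf₂, qmul_zero S S₁ S₂ f₁ f₂ hS hS₁ hS₂ hf₁ hf₂]
  rw [io₂_eq S S₁ S₂ f₁ f₂ hS hS₁ hS₂ hf₁ hf₂ hy
      ⟨(S₁.one, y), iff_of_false hS₁.one_ne_zero hy⟩ rfl rfl,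
    io₂_eq S S₁ S₂ f₁ f₂ hS hS₁ hS₂ hf₁ hf₂ hy'
      ⟨(S₁.one, y'), iff_of_false hS₁.one_ne_zero hy'⟩ rfl rfl,
    io₂_eq S S₁ S₂ f₁ f₂ hS hS₁ hS₂ hf₁ hf₂ (hS₂.mul_ne_zero y y' hy hy')
      ⟨(S₁.one, S₂.mul y y'), iff_of_false hS₁.one_ne_zero (hS₂.mul_ne_zero y y' hy hy')⟩ rfl rfl,
    qmul_mk]
  exact mk_eq_mk S S₁ S₂ f₁ f₂ hS hS₁ hS₂ hf₁ hf₂ (hS₁.one_mul _).symm rfl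

theorem io₁_map_neg (x : P₁) : io₁A (S₁.neg x) = qnegA (io₁A x) := by
  by_cases hx : x = S₁.zero
  · subst hx
    rw [hS₁.neg_zero, io₁_zero S S₁ S₂ f₁ f₂ hS hS₁ hS₂ hf₁ hf₂, qneg_zero S S₁ S₂ f₁ f₂ hS hS₁ hS₂ hf₁ hf₂]
  · have hnx : S₁.neg x ≠ S₁.zero := fun h => hx ((neg_eq_zero hS₁).1 h)
    rw [io₁_eq S S₁ S₂ f₁ f₂ hS hS₁ hS₂ hf₁ hf₂ hx
        ⟨(x, S₂.one), iff_of_false hx hS₂.one_ne_zero⟩ rfl rfl,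
      io₁_eq S S₁ S₂ f₁ f₂ hS hS₁ hS₂ hf₁ hf₂ hnx
        ⟨(S₁.neg x, S₂.one), iff_of_false hnx hS₂.one_ne_zero⟩ rfl rfl,
      qneg_mk]
    exact mk_eq_mk S S₁ S₂ f₁ f₂ hS hS₁ hS₂ hf₁ hf₂ rfl rfl

theorem io₂_map_neg (y : P₂) : io₂A (S₂.neg y) = qnegA (io₂A y) := by
  by_cases hy : y = S₂.zero
  · subst hy
    rw [hS₂.neg_zero, io₂_zero S S₁ S₂ f₁ f₂ hS hS₁ hS₂ hf₁ hf₂, qneg_zero S S₁ S₂ f₁ f₂ hS hS₁ hS₂ hf₁ hf₂]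
  · have hny : S₂.neg y ≠ S₂.zero := fun h => hy ((neg_eq_zero hS₂).1 h)
    rw [io₂_eq S S₁ S₂ f₁ f₂ hS hS₁ hS₂ hf₁ hf₂ hy
        ⟨(S₁.one, y), iff_of_false hS₁.one_ne_zero hy⟩ rfl rfl,
      io₂_eq S S₁ S₂ f₁ f₂ hS hS₁ hS₂ hf₁ hf₂ hny
        ⟨(S₁.one, S₂.neg y), iff_of_false hS₁.one_ne_zero hny⟩ rfl rfl,
      qneg_mk]
    refine Quotient.sound ⟨S.neg S.one, S.neg S.one, neg_one_sq hS, ?_, ?_⟩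
    · show S₁.neg S₁.one = S₁.mul S₁.one (f₁ (S.neg S.one))
      rw [hf₁.map_neg, hf₁.map_one, hS₁.one_mul]
    · show y = S₂.mul (S₂.neg y) (f₂ (S.neg S.one))
      rw [hf₂.map_neg, hf₂.map_one, mul_neg hS₂, mul_one hS₂, hS₂.neg_neg]

theorem mk_decomp (z : Zt S₁ S₂) :
    mk z = qmulA (io₁A z.1.1) (io₂A z.1.2) := by
  by_cases hz : z.1.1 = S₁.zero
  · rw [(eq_zero_iff S S₁ S₂ f₁ f₂ hS hS₁ hS₂ hf₁ hf₂ z).2 hz, hz, z.2.1 hz, io₁_zero S S₁ S₂ f₁ f₂ hS hS₁ hS₂ hf₁ hf₂,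
      qzero_mul S S₁ S₂ f₁ f₂ hS hS₁ hS₂ hf₁ hf₂]
  · have hz2 : z.1.2 ≠ S₂.zero := fun h => hz (z.2.2 h)
    rw [io₁_eq S S₁ S₂ f₁ f₂ hS hS₁ hS₂ hf₁ hf₂ hz
        ⟨(z.1.1, S₂.one), iff_of_false hz hS₂.one_ne_zero⟩ rfl rfl,
      io₂_eq S S₁ S₂ f₁ f₂ hS hS₁ hS₂ hf₁ hf₂ hz2
        ⟨(S₁.one, z.1.2), iff_of_false hS₁.one_ne_zero hz2⟩ rfl rfl,
      qmul_mk]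
    exact mk_eq_mk S S₁ S₂ f₁ f₂ hS hS₁ hS₂ hf₁ hf₂ (mul_one hS₁ _).symm (hS₂.one_mul _).symm

theorem io_compat (p : P) : io₁A (f₁ p) = io₂A (f₂ p) := by
  by_cases hp : p = S.zero
  · subst hp
    rw [hf₁.map_zero, hf₂.map_zero, io₁_zero S S₁ S₂ f₁ f₂ hS hS₁ hS₂ hf₁ hf₂, io₂_zero S S₁ S₂ f₁ f₂ hS hS₁ hS₂ hf₁ hf₂]
  · have h1 : f₁ p ≠ S₁.zero := hom_ne_zero hS hS₁ hf₁ hp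
    have h2 : f₂ p ≠ S₂.zero := hom_ne_zero hS hS₂ hf₂ hp
    obtain ⟨p', hp'⟩ := hS.exists_inv p hp
    rw [io₁_eq S S₁ S₂ f₁ f₂ hS hS₁ hS₂ hf₁ hf₂ h1
        ⟨(f₁ p, S₂.one), iff_of_false h1 hS₂.one_ne_zero⟩ rfl rfl,
      io₂_eq S S₁ S₂ f₁ f₂ hS hS₁ hS₂ hf₁ hf₂ h2
        ⟨(S₁.one, f₂ p), iff_of_false hS₁.one_ne_zero h2⟩ rfl rfl]
    refine Quotient.sound ⟨p', p, by rwa [hS.mul_comm], ?_, ?_⟩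
    · show S₁.one = S₁.mul (f₁ p) (f₁ p')
      rw [← hf₁.map_mul, hp', hf₁.map_one]
    · exact (hS₂.one_mul _).symm

local notation "qnullA" => qnull S S₁ S₂ f₁ f₂ hS hS₁ hS₂ hf₁ hf₂

theorem qnull_swap_left {q₁ q₂ q₃ : QQ} (h : qnullA q₁ q₂ q₃) : qnullA q₂ q₁ q₃ := by
  rcases h with ⟨d,a,b,c,hn,e1,e2,e3⟩|⟨d,a,b,c,hn,e1,e2,e3⟩
  · exact Or.inl ⟨d,b,a,c, hS₁.null_swap_left _ _ _ hn, e2, e1, e3⟩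
  · exact Or.inr ⟨d,b,a,c, hS₂.null_swap_left _ _ _ hn, e2, e1, e3⟩

theorem qnull_swap_right {q₁ q₂ q₃ : QQ} (h : qnullA q₁ q₂ q₃) : qnullA q₁ q₃ q₂ := by
  rcases h with ⟨d,a,b,c,hn,e1,e2,e3⟩|⟨d,a,b,c,hn,e1,e2,e3⟩
  · exact Or.inl ⟨d,a,c,b, hS₁.null_swap_right _ _ _ hn, e1, e3, e2⟩
  · exact Or.inr ⟨d,a,c,b, hS₂.null_swap_right _ _ _ hn, e1, e3, e2⟩

theorem qnull_mul (d : QQ) {q₁ q₂ q₃ : QQ} (h : qnullA q₁ q₂ q₃) :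
    qnullA (qmulA d q₁) (qmulA d q₂) (qmulA d q₃) := by
  rcases h with ⟨d₀,a,b,c,hn,e1,e2,e3⟩|⟨d₀,a,b,c,hn,e1,e2,e3⟩
  · exact Or.inl ⟨qmulA d d₀, a, b, c, hn,
      by rw [e1, qmul_assoc S S₁ S₂ f₁ f₂ hS hS₁ hS₂ hf₁ hf₂], by rw [e2, qmul_assoc S S₁ S₂ f₁ f₂ hS hS₁ hS₂ hf₁ hf₂], by rw [e3, qmul_assoc S S₁ S₂ f₁ f₂ hS hS₁ hS₂ hf₁ hf₂]⟩
  · exact Or.inr ⟨qmulA d d₀, a, b, c, hn,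
      by rw [e1, qmul_assoc S S₁ S₂ f₁ f₂ hS hS₁ hS₂ hf₁ hf₂], by rw [e2, qmul_assoc S S₁ S₂ f₁ f₂ hS hS₁ hS₂ hf₁ hf₂], by rw [e3, qmul_assoc S S₁ S₂ f₁ f₂ hS hS₁ hS₂ hf₁ hf₂]⟩

theorem qnull_zero (q₁ q₂ : QQ) : qnullA q₁ q₂ qzeroA ↔ q₁ = qnegA q₂ := by
  constructor
  · rintro (⟨d,a,b,c,hn,e1,e2,e3⟩|⟨d,a,b,c,hn,e1,e2,e3⟩)
    · rcases (qmul_eq_zero S S₁ S₂ f₁ f₂ hS hS₁ hS₂ hf₁ hf₂).1 e3.symm with hd | hc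
      · rw [e1, e2, hd, qzero_mul S S₁ S₂ f₁ f₂ hS hS₁ hS₂ hf₁ hf₂, qzero_mul S S₁ S₂ f₁ f₂ hS hS₁ hS₂ hf₁ hf₂, qneg_zero S S₁ S₂ f₁ f₂ hS hS₁ hS₂ hf₁ hf₂]
      · by_cases hc0 : c = S₁.zero
        · subst hc0
          have ha : a = S₁.neg b := (hS₁.null_zero a b).1 hn
          rw [e1, e2, ha, io₁_map_neg S S₁ S₂ f₁ f₂ hS hS₁ hS₂ hf₁ hf₂, qmul_neg S S₁ S₂ f₁ f₂ hS hS₁ hS₂ hf₁ hf₂]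
        · exact absurd hc (io₁_ne_zero S S₁ S₂ f₁ f₂ hS hS₁ hS₂ hf₁ hf₂ hc0)
    · rcases (qmul_eq_zero S S₁ S₂ f₁ f₂ hS hS₁ hS₂ hf₁ hf₂).1 e3.symm with hd | hc
      · rw [e1, e2, hd, qzero_mul S S₁ S₂ f₁ f₂ hS hS₁ hS₂ hf₁ hf₂, qzero_mul S S₁ S₂ f₁ f₂ hS hS₁ hS₂ hf₁ hf₂, qneg_zero S S₁ S₂ f₁ f₂ hS hS₁ hS₂ hf₁ hf₂]
      · by_cases hc0 : c = S₂.zero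
        · subst hc0
          have ha : a = S₂.neg b := (hS₂.null_zero a b).1 hn
          rw [e1, e2, ha, io₂_map_neg S S₁ S₂ f₁ f₂ hS hS₁ hS₂ hf₁ hf₂, qmul_neg S S₁ S₂ f₁ f₂ hS hS₁ hS₂ hf₁ hf₂]
        · exact absurd hc (io₂_ne_zero S S₁ S₂ f₁ f₂ hS hS₁ hS₂ hf₁ hf₂ hc0)
  · intro h
    refine Or.inl ⟨q₂, S₁.neg S₁.one, S₁.one, S₁.zero, (hS₁.null_zero _ _).2 rfl, ?_, ?_, ?_⟩
    · rw [h, io₁_map_neg S S₁ S₂ f₁ f₂ hS hS₁ hS₂ hf₁ hf₂, io₁_one S S₁ S₂ f₁ f₂ hS hS₁ hS₂ hf₁ hf₂, qmul_neg S S₁ S₂ f₁ f₂ hS hS₁ hS₂ hf₁ hf₂, qmul_one S S₁ S₂ f₁ f₂ hS hS₁ hS₂ hf₁ hf₂]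
    · rw [io₁_one S S₁ S₂ f₁ f₂ hS hS₁ hS₂ hf₁ hf₂, qmul_one S S₁ S₂ f₁ f₂ hS hS₁ hS₂ hf₁ hf₂]
    · rw [io₁_zero S S₁ S₂ f₁ f₂ hS hS₁ hS₂ hf₁ hf₂, qmul_zero S S₁ S₂ f₁ f₂ hS hS₁ hS₂ hf₁ hf₂]

theorem qone_ne_zero : qoneA ≠ qzeroA := by
  intro h
  exact hS₁.one_ne_zero ((eq_zero_iff S S₁ S₂ f₁ f₂ hS hS₁ hS₂ hf₁ hf₂ _).1 h)

theorem q_exists_inv (q : QQ) (hq : q ≠ qzeroA) : ∃ r, qmulA q r = qoneA := by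
  induction q using q_ind S S₁ S₂ f₁ f₂ hS hS₁ hS₂ hf₁ hf₂ with | h z =>
  have hz1 : z.1.1 ≠ S₁.zero := fun h => hq ((eq_zero_iff S S₁ S₂ f₁ f₂ hS hS₁ hS₂ hf₁ hf₂ z).2 h)
  have hz2 : z.1.2 ≠ S₂.zero := fun h => hz1 (z.2.2 h)
  obtain ⟨x', hx'⟩ := hS₁.exists_inv _ hz1
  obtain ⟨y', hy'⟩ := hS₂.exists_inv _ hz2
  have hx'0 : x' ≠ S₁.zero := unit_ne_zero hS₁ (by rwa [hS₁.mul_comm] at hx')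
  have hy'0 : y' ≠ S₂.zero := unit_ne_zero hS₂ (by rwa [hS₂.mul_comm] at hy')
  refine ⟨mk ⟨(x', y'), iff_of_false hx'0 hy'0⟩, ?_⟩
  rw [qmul_mk]
  exact mk_eq_mk S S₁ S₂ f₁ f₂ hS hS₁ hS₂ hf₁ hf₂ hx' hy'

theorem q_isPasture : (SQ S S₁ S₂ f₁ f₂ hS hS₁ hS₂ hf₁ hf₂).IsPasture := by
  refine ⟨qmul_comm S S₁ S₂ f₁ f₂ hS hS₁ hS₂ hf₁ hf₂, qmul_assoc S S₁ S₂ f₁ f₂ hS hS₁ hS₂ hf₁ hf₂, qone_mul S S₁ S₂ f₁ f₂ hS hS₁ hS₂ hf₁ hf₂, qzero_mul S S₁ S₂ f₁ f₂ hS hS₁ hS₂ hf₁ hf₂, qone_ne_zero S S₁ S₂ f₁ f₂ hS hS₁ hS₂ hf₁ hf₂,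
    ?_, q_exists_inv S S₁ S₂ f₁ f₂ hS hS₁ hS₂ hf₁ hf₂, qneg_neg S S₁ S₂ f₁ f₂ hS hS₁ hS₂ hf₁ hf₂, qneg_zero S S₁ S₂ f₁ f₂ hS hS₁ hS₂ hf₁ hf₂,
    fun a b c h => qnull_swap_left S S₁ S₂ f₁ f₂ hS hS₁ hS₂ hf₁ hf₂ h, fun a b c h => qnull_swap_right S S₁ S₂ f₁ f₂ hS hS₁ hS₂ hf₁ hf₂ h,
    fun d a b c h => qnull_mul S S₁ S₂ f₁ f₂ hS hS₁ hS₂ hf₁ hf₂ d h, qnull_zero S S₁ S₂ f₁ f₂ hS hS₁ hS₂ hf₁ hf₂⟩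
  intro p q hp hq h0
  rcases (qmul_eq_zero S S₁ S₂ f₁ f₂ hS hS₁ hS₂ hf₁ hf₂).1 h0 with h | h
  exacts [hp h, hq h]

theorem io₁_map_null (a b c : P₁) (h : S₁.null a b c) :
    qnullA (io₁A a) (io₁A b) (io₁A c) :=
  Or.inl ⟨qoneA, a, b, c, h, (qone_mul S S₁ S₂ f₁ f₂ hS hS₁ hS₂ hf₁ hf₂ _).symm, (qone_mul S S₁ S₂ f₁ f₂ hS hS₁ hS₂ hf₁ hf₂ _).symm,
    (qone_mul S S₁ S₂ f₁ f₂ hS hS₁ hS₂ hf₁ hf₂ _).symm⟩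

theorem io₂_map_null (a b c : P₂) (h : S₂.null a b c) :
    qnullA (io₂A a) (io₂A b) (io₂A c) :=
  Or.inr ⟨qoneA, a, b, c, h, (qone_mul S S₁ S₂ f₁ f₂ hS hS₁ hS₂ hf₁ hf₂ _).symm, (qone_mul S S₁ S₂ f₁ f₂ hS hS₁ hS₂ hf₁ hf₂ _).symm,
    (qone_mul S S₁ S₂ f₁ f₂ hS hS₁ hS₂ hf₁ hf₂ _).symm⟩

theorem io₁_isHom : S₁.IsHom (SQ S S₁ S₂ f₁ f₂ hS hS₁ hS₂ hf₁ hf₂) (io₁ S S₁ S₂ f₁ f₂ hS hS₁ hS₂ hf₁ hf₂) :=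
  ⟨io₁_map_mul S S₁ S₂ f₁ f₂ hS hS₁ hS₂ hf₁ hf₂, io₁_zero S S₁ S₂ f₁ f₂ hS hS₁ hS₂ hf₁ hf₂, io₁_one S S₁ S₂ f₁ f₂ hS hS₁ hS₂ hf₁ hf₂, io₁_map_neg S S₁ S₂ f₁ f₂ hS hS₁ hS₂ hf₁ hf₂, io₁_map_null S S₁ S₂ f₁ f₂ hS hS₁ hS₂ hf₁ hf₂⟩

theorem io₂_isHom : S₂.IsHom (SQ S S₁ S₂ f₁ f₂ hS hS₁ hS₂ hf₁ hf₂) (io₂ S S₁ S₂ f₁ f₂ hS hS₁ hS₂ hf₁ hf₂) :=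
  ⟨io₂_map_mul S S₁ S₂ f₁ f₂ hS hS₁ hS₂ hf₁ hf₂, io₂_zero S S₁ S₂ f₁ f₂ hS hS₁ hS₂ hf₁ hf₂, io₂_one S S₁ S₂ f₁ f₂ hS hS₁ hS₂ hf₁ hf₂, io₂_map_neg S S₁ S₂ f₁ f₂ hS hS₁ hS₂ hf₁ hf₂, io₂_map_null S S₁ S₂ f₁ f₂ hS hS₁ hS₂ hf₁ hf₂⟩

end Push
end PastureAux

open PastureAux

/-- **The category of pastures has fibered coproducts.**
For pastures `P, P₁, P₂` and morphisms `f₁ : P → P₁`, `f₂ : P → P₂` there is a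
pasture `Q` with morphisms `i₁ : P₁ → Q`, `i₂ : P₂ → Q` satisfying
`i₁ ∘ f₁ = i₂ ∘ f₂`, such that for every pasture `P'` with morphisms
`g₁ : P₁ → P'`, `g₂ : P₂ → P'` with `g₁ ∘ f₁ = g₂ ∘ f₂` there is a unique
morphism `g : Q → P'` with `g ∘ i₁ = g₁` and `g ∘ i₂ = g₂`. -/
theorem pastures_have_fibered_coproducts
    {P P₁ P₂ : Type u} (S : PastureStr P) (S₁ : PastureStr P₁) (S₂ : PastureStr P₂)
    (hS : S.IsPasture) (hS₁ : S₁.IsPasture) (hS₂ : S₂.IsPasture)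
    (f₁ : P → P₁) (f₂ : P → P₂) (hf₁ : S.IsHom S₁ f₁) (hf₂ : S.IsHom S₂ f₂) :
    ∃ (Q : Type u) (SQ : PastureStr Q), SQ.IsPasture ∧
      ∃ (i₁ : P₁ → Q) (i₂ : P₂ → Q),
        PastureStr.IsHom S₁ SQ i₁ ∧ PastureStr.IsHom S₂ SQ i₂ ∧
        i₁ ∘ f₁ = i₂ ∘ f₂ ∧
        ∀ (P' : Type v) (S' : PastureStr P'), S'.IsPasture →
          ∀ (g₁ : P₁ → P') (g₂ : P₂ → P'),
            PastureStr.IsHom S₁ S' g₁ → PastureStr.IsHom S₂ S' g₂ →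
            g₁ ∘ f₁ = g₂ ∘ f₂ →
            ∃! g : Q → P',
              PastureStr.IsHom SQ S' g ∧ g ∘ i₁ = g₁ ∧ g ∘ i₂ = g₂ := by
  classical
  refine ⟨Q S S₁ S₂ f₁ f₂ hS hS₁ hS₂ hf₁ hf₂, SQ S S₁ S₂ f₁ f₂ hS hS₁ hS₂ hf₁ hf₂, q_isPasture S S₁ S₂ f₁ f₂ hS hS₁ hS₂ hf₁ hf₂, io₁ S S₁ S₂ f₁ f₂ hS hS₁ hS₂ hf₁ hf₂, io₂ S S₁ S₂ f₁ f₂ hS hS₁ hS₂ hf₁ hf₂,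
    io₁_isHom S S₁ S₂ f₁ f₂ hS hS₁ hS₂ hf₁ hf₂, io₂_isHom S S₁ S₂ f₁ f₂ hS hS₁ hS₂ hf₁ hf₂, funext (io_compat S S₁ S₂ f₁ f₂ hS hS₁ hS₂ hf₁ hf₂), ?_⟩
  intro P' S' hS' g₁ g₂ hg₁ hg₂ hcomp
  have hwd : ∀ z w : Zt S₁ S₂, Rel S S₁ S₂ f₁ f₂ z w →
      S'.mul (g₁ z.1.1) (g₂ z.1.2) = S'.mul (g₁ w.1.1) (g₂ w.1.2) := by
    rintro z w ⟨a, a', h1, h2, h3⟩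
    rw [h2, h3, hg₁.map_mul, hg₂.map_mul, mul_mul_mul_comm hS']
    have key : S'.mul (g₁ (f₁ a)) (g₂ (f₂ a')) = S'.one := by
      have ha : g₁ (f₁ a) = g₂ (f₂ a) := congrFun hcomp a
      rw [ha, ← hg₂.map_mul, ← hf₂.map_mul, h1, hf₂.map_one, hg₂.map_one]
    rw [key, mul_one hS']
  set gl : Q S S₁ S₂ f₁ f₂ hS hS₁ hS₂ hf₁ hf₂ → P' :=
    Quotient.lift (fun z : Zt S₁ S₂ => S'.mul (g₁ z.1.1) (g₂ z.1.2)) hwd with hgl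
  have glmk : ∀ z : Zt S₁ S₂, gl (mkQ S S₁ S₂ f₁ f₂ hS hS₁ hS₂ hf₁ hf₂ z) = S'.mul (g₁ z.1.1) (g₂ z.1.2) :=
    fun z => rfl
  have glmul : ∀ p q, gl (qmul S S₁ S₂ f₁ f₂ hS hS₁ hS₂ hf₁ hf₂ p q) = S'.mul (gl p) (gl q) := by
    intro p q
    induction p using q_ind S S₁ S₂ f₁ f₂ hS hS₁ hS₂ hf₁ hf₂ with | h z =>
    induction q using q_ind S S₁ S₂ f₁ f₂ hS hS₁ hS₂ hf₁ hf₂ with | h w =>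
    rw [qmul_mk, glmk, glmk, glmk]
    show S'.mul (g₁ (S₁.mul z.1.1 w.1.1)) (g₂ (S₂.mul z.1.2 w.1.2)) = _
    rw [hg₁.map_mul, hg₂.map_mul, mul_mul_mul_comm hS']
  have gl0 : gl (qzero S S₁ S₂ f₁ f₂ hS hS₁ hS₂ hf₁ hf₂) = S'.zero := by
    rw [show qzero S S₁ S₂ f₁ f₂ hS hS₁ hS₂ hf₁ hf₂ = mkQ S S₁ S₂ f₁ f₂ hS hS₁ hS₂ hf₁ hf₂ ⟨(S₁.zero, S₂.zero), by simp⟩ from rfl,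
      glmk, hg₁.map_zero, hg₂.map_zero, mul_zero hS']
  have gl1 : gl (qone S S₁ S₂ f₁ f₂ hS hS₁ hS₂ hf₁ hf₂) = S'.one := by
    rw [show qone S S₁ S₂ f₁ f₂ hS hS₁ hS₂ hf₁ hf₂ = mkQ S S₁ S₂ f₁ f₂ hS hS₁ hS₂ hf₁ hf₂
        ⟨(S₁.one, S₂.one), iff_of_false hS₁.one_ne_zero hS₂.one_ne_zero⟩ from rfl,
      glmk, hg₁.map_one, hg₂.map_one, mul_one hS']
  have glio₁ : ∀ x : P₁, gl (io₁ S S₁ S₂ f₁ f₂ hS hS₁ hS₂ hf₁ hf₂ x) = g₁ x := by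
    intro x
    by_cases hx : x = S₁.zero
    · subst hx
      rw [io₁_zero S S₁ S₂ f₁ f₂ hS hS₁ hS₂ hf₁ hf₂, gl0, hg₁.map_zero]
    · rw [io₁_eq S S₁ S₂ f₁ f₂ hS hS₁ hS₂ hf₁ hf₂ hx ⟨(x, S₂.one), iff_of_false hx hS₂.one_ne_zero⟩ rfl rfl,
        glmk, hg₂.map_one, mul_one hS']
  have glio₂ : ∀ y : P₂, gl (io₂ S S₁ S₂ f₁ f₂ hS hS₁ hS₂ hf₁ hf₂ y) = g₂ y := by
    intro y
    by_cases hy : y = S₂.zero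
    · subst hy
      rw [io₂_zero S S₁ S₂ f₁ f₂ hS hS₁ hS₂ hf₁ hf₂, gl0, hg₂.map_zero]
    · rw [io₂_eq S S₁ S₂ f₁ f₂ hS hS₁ hS₂ hf₁ hf₂ hy ⟨(S₁.one, y), iff_of_false hS₁.one_ne_zero hy⟩ rfl rfl,
        glmk, hg₁.map_one, hS'.one_mul]
  have glhom : PastureStr.IsHom (SQ S S₁ S₂ f₁ f₂ hS hS₁ hS₂ hf₁ hf₂) S' gl := by
    refine ⟨glmul, ?_, ?_, ?_, ?_⟩
    · exact gl0
    · exact gl1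
    · intro q
      induction q using q_ind S S₁ S₂ f₁ f₂ hS hS₁ hS₂ hf₁ hf₂ with | h z =>
      show gl (qneg S S₁ S₂ f₁ f₂ hS hS₁ hS₂ hf₁ hf₂ (mkQ S S₁ S₂ f₁ f₂ hS hS₁ hS₂ hf₁ hf₂ z)) = S'.neg (gl (mkQ S S₁ S₂ f₁ f₂ hS hS₁ hS₂ hf₁ hf₂ z))
      rw [qneg_mk, glmk, glmk]
      show S'.mul (g₁ (S₁.neg z.1.1)) (g₂ z.1.2) = _
      rw [hg₁.map_neg, neg_mul hS']
    · rintro q₁ q₂ q₃ (⟨d,a,b,c,hn,e1,e2,e3⟩|⟨d,a,b,c,hn,e1,e2,e3⟩)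
      · rw [e1, e2, e3, glmul, glmul, glmul, glio₁, glio₁, glio₁]
        exact hS'.null_mul (gl d) _ _ _ (hg₁.map_null a b c hn)
      · rw [e1, e2, e3, glmul, glmul, glmul, glio₂, glio₂, glio₂]
        exact hS'.null_mul (gl d) _ _ _ (hg₂.map_null a b c hn)
  refine ⟨gl, ⟨glhom, funext glio₁, funext glio₂⟩, ?_⟩
  rintro g' ⟨hg', h1, h2⟩
  funext q
  induction q using q_ind S S₁ S₂ f₁ f₂ hS hS₁ hS₂ hf₁ hf₂ with | h z =>
  have hg'mul : ∀ p q, g' (qmul S S₁ S₂ f₁ f₂ hS hS₁ hS₂ hf₁ hf₂ p q) = S'.mul (g' p) (g' q) := hg'.map_mul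
  rw [glmk, mk_decomp S S₁ S₂ f₁ f₂ hS hS₁ hS₂ hf₁ hf₂ z, hg'mul]
  show S'.mul (g' (io₁ S S₁ S₂ f₁ f₂ hS hS₁ hS₂ hf₁ hf₂ z.1.1)) (g' (io₂ S S₁ S₂ f₁ f₂ hS hS₁ hS₂ hf₁ hf₂ z.1.2)) = _
  rw [show g' (io₁ S S₁ S₂ f₁ f₂ hS hS₁ hS₂ hf₁ hf₂ z.1.1) = g₁ z.1.1 from congrFun h1 z.1.1,
    show g' (io₂ S S₁ S₂ f₁ f₂ hS hS₁ hS₂ hf₁ hf₂ z.1.2) = g₂ z.1.2 from congrFun h2 z.1.2]
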